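/- Fix κ² > 0. For a C¹ function θ : [−π, π] → ℝ with θ(π) − θ(−π) = 2πj for some integer j, define E(θ) := ∫_{−π}^{π} ( |θ'(t) + 1|² + κ² sin²θ(t) ) dt. If θ minimizes E over all C¹ functions on [−π, π] whose endpoint difference is an integer multiple of 2π, then θ(π) − θ(−π) ∈ {−2π, 0}. Equivalently, every global in-plane minimizer m_⊥ has winding degree 0 or 1. -/

import Mathlib

open Real Set MeasureTheory

/-- The in-plane energy `E(θ) = ∫_{−π}^{π} (|θ' + 1|² + κ² sin²θ) dt` in the
lifting representation `m_⊥ = sin θ · τ + cos θ · n`. -/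
noncomputable def inplaneE (κ : ℝ) (θ : ℝ → ℝ) : ℝ :=
  ∫ t in (-π)..π, ((deriv θ t + 1) ^ 2 + κ ^ 2 * Real.sin (θ t) ^ 2)

/-- **Global in-plane minimizers have winding degree `0` or `1`**: if `θ`
minimizes the in-plane energy among all `C¹` functions whose endpoint difference
`θ(π) − θ(−π)` is an integer multiple of `2π`, then `θ(π) − θ(−π) ∈ {−2π, 0}`. -/
theorem inplane_minimizer_degree_zero_or_one
    (κ : ℝ) (hκ : 0 < κ ^ 2)
    (θ : ℝ → ℝ) (hθ : ContDiff ℝ 1 θ)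
    (hj : ∃ j : ℤ, θ π - θ (-π) = 2 * π * j)
    (hmin : ∀ ψ : ℝ → ℝ, ContDiff ℝ 1 ψ →
      (∃ j : ℤ, ψ π - ψ (-π) = 2 * π * j) → inplaneE κ θ ≤ inplaneE κ ψ) :
    θ π - θ (-π) = -(2 * π) ∨ θ π - θ (-π) = 0 := by
  by_contra hcon
  push_neg at hcon
  obtain ⟨hne1, hne2⟩ := hcon
  obtain ⟨j, hjd⟩ := hj
  have hπ : (0:ℝ) < π := Real.pi_pos
  have hle : (-π:ℝ) ≤ π := by linarith
  -- continuity facts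
  have hθc : Continuous θ := hθ.continuous
  have hθ'c : Continuous (deriv θ) := hθ.continuous_deriv le_rfl
  set f : ℝ → ℝ := fun t => deriv θ t + 1 with hf
  have hfc : Continuous f := hθ'c.add continuous_const
  have hfint : IntervalIntegrable f volume (-π) π := hfc.intervalIntegrable _ _
  have hf2int : IntervalIntegrable (fun t => f t ^ 2) volume (-π) π :=
    (hfc.pow 2).intervalIntegrable _ _
  have hsinc : Continuous (fun t => Real.sin (θ t) ^ 2) := (Real.continuous_sin.comp hθc).pow 2
  have hsinint : IntervalIntegrable (fun t => Real.sin (θ t) ^ 2) volume (-π) π :=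
    hsinc.intervalIntegrable _ _
  set I1 : ℝ := ∫ t in (-π)..π, f t ^ 2 with hI1
  set I2 : ℝ := ∫ t in (-π)..π, Real.sin (θ t) ^ 2 with hI2
  -- the energy splits
  have hsplit : inplaneE κ θ = I1 + κ ^ 2 * I2 := by
    rw [inplaneE, hI1, hI2, ← intervalIntegral.integral_const_mul,
      ← intervalIntegral.integral_add hf2int
        ((show Continuous (fun t => κ ^ 2 * Real.sin (θ t) ^ 2) from continuous_const.mul hsinc).intervalIntegrable _ _)]
  -- fundamental theorem of calculus
  have hftc : (∫ t in (-π)..π, deriv θ t) = θ π - θ (-π) := by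
    exact intervalIntegral.integral_deriv_eq_sub
      (fun x _ => (hθ.differentiable one_ne_zero).differentiableAt)
      (hθ'c.intervalIntegrable _ _)
  have hfI : (∫ t in (-π)..π, f t) = 2 * π * ((j:ℝ) + 1) := by
    rw [hf]
    rw [intervalIntegral.integral_add (hθ'c.intervalIntegrable _ _)
      (intervalIntegrable_const), hftc, hjd]
    simp
    ring
  -- Cauchy–Schwarz lower bound: I1 ≥ 2π (j+1)²
  set c : ℝ := (j:ℝ) + 1 with hc
  have hCS : 2 * π * c ^ 2 ≤ I1 := by
    have h0 : (0:ℝ) ≤ ∫ t in (-π)..π, (f t - c) ^ 2 :=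
      intervalIntegral.integral_nonneg hle (fun t _ => sq_nonneg _)
    have hexp : (∫ t in (-π)..π, (f t - c) ^ 2)
        = I1 - 2 * c * (∫ t in (-π)..π, f t) + (π - (-π)) * c ^ 2 := by
      have hptw : ∀ t : ℝ, (f t - c) ^ 2 = f t ^ 2 - 2 * c * f t + c ^ 2 := by
        intro t; ring
      simp_rw [hptw]
      rw [intervalIntegral.integral_add (IntervalIntegrable.sub hf2int
          ((show Continuous (fun t => 2 * c * f t) from continuous_const.mul hfc).intervalIntegrable _ _)) intervalIntegrable_const,
        intervalIntegral.integral_sub hf2int ((show Continuous (fun t => 2 * c * f t) from continuous_const.mul hfc).intervalIntegrable _ _),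
        intervalIntegral.integral_const_mul, intervalIntegral.integral_const]
      simp [smul_eq_mul]
      rfl
    rw [hexp, hfI] at h0
    nlinarith
  -- I2 ≥ 0
  have hI2nn : 0 ≤ I2 := intervalIntegral.integral_nonneg hle (fun t _ => sq_nonneg _)
  -- upper bound: E(θ) ≤ E(0) = 2π
  have hE0 : inplaneE κ (fun _ => 0) = 2 * π := by
    rw [inplaneE]
    have : ∀ t : ℝ, (deriv (fun _ : ℝ => (0:ℝ)) t + 1) ^ 2
        + κ ^ 2 * Real.sin ((fun _ : ℝ => (0:ℝ)) t) ^ 2 = 1 := by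
      intro t; simp
    simp_rw [this]
    simp
    ring
  have hub : inplaneE κ θ ≤ 2 * π := by
    rw [← hE0]
    exact hmin _ contDiff_const ⟨0, by simp⟩
  -- combine: 2π c² ≤ 2π, so c² ≤ 1
  have hc2 : c ^ 2 ≤ 1 := by
    have := hsplit ▸ hub
    nlinarith
  -- c = j+1 is a nonzero integer with c² ≤ 1 and c ≠ 1, so c = -1, i.e. j = -2
  have hjne1 : (j:ℝ) ≠ -1 := by
    intro h; apply hne1; rw [hjd, h]; ring
  have hjne0 : (j:ℝ) ≠ 0 := by
    intro h; apply hne2; rw [hjd, h]; ring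
  have hjz1 : j ≠ -1 := fun h => hjne1 (by exact_mod_cast congrArg (Int.cast : ℤ → ℝ) h)
  have hjz0 : j ≠ 0 := fun h => hjne0 (by exact_mod_cast congrArg (Int.cast : ℤ → ℝ) h)
  have hk2 : ((j + 1 : ℤ) : ℝ) ^ 2 ≤ 1 := by push_cast; convert hc2 using 2
  have hk2' : (j + 1) ^ 2 ≤ 1 := by exact_mod_cast hk2
  have hjm2 : j = -2 := by
    have h1 : -1 ≤ j + 1 := by nlinarith [sq_nonneg (j + 2)]
    have h2 : j + 1 ≤ 1 := by nlinarith [sq_nonneg j]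
    omega
  -- then c = -1, so I1 ≥ 2π and hence I2 ≤ 0, so I2 = 0
  have hcval : c = -1 := by rw [hc, hjm2]; push_cast; ring
  have hI1ge : 2 * π ≤ I1 := by rw [hcval] at hCS; nlinarith
  have hI2z : I2 = 0 := by
    have := hsplit ▸ hub
    nlinarith
  -- hence sin θ ≡ 0 on [-π, π]
  have hae : (fun t => Real.sin (θ t) ^ 2) =ᵐ[volume.restrict (Ioc (-π) π)] 0 :=
    (intervalIntegral.integral_eq_zero_iff_of_le_of_nonneg_ae hle
      (Filter.Eventually.of_forall fun t => sq_nonneg _) hsinint).mp hI2z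
  have heqOn : EqOn (fun t => Real.sin (θ t) ^ 2) 0 (Ioc (-π) π) :=
    Measure.eqOn_of_ae_eq hae hsinc.continuousOn continuousOn_const
      (by
        rw [interior_Ioc, closure_Ioo (by linarith : (-π:ℝ) ≠ π)]
        exact Ioc_subset_Icc_self)
  have heqIcc : EqOn (fun t => Real.sin (θ t) ^ 2) 0 (Icc (-π) π) := by
    have := heqOn.closure hsinc continuous_const
    rwa [closure_Ioc (by linarith : (-π:ℝ) ≠ π)] at this
  have hsinzero : ∀ t ∈ Icc (-π) π, Real.sin (θ t) = 0 := by
    intro t ht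
    have := heqIcc ht
    simpa [pow_eq_zero_iff] using this
  -- intermediate value theorem contradiction
  have hdiff : θ (-π) = θ π + 4 * π := by
    rw [hjm2] at hjd; push_cast at hjd; linarith
  have hmem : θ π + π / 2 ∈ Icc (θ π) (θ (-π)) := by
    constructor <;> [linarith; linarith [hdiff]]
  obtain ⟨t, ht, hθt⟩ := intermediate_value_Icc' hle hθc.continuousOn hmem
  have h1 : Real.sin (θ t) = 0 := hsinzero t ht
  have h2 : Real.sin (θ π) = 0 := hsinzero π (by constructor <;> linarith)
  rw [hθt, Real.sin_add_pi_div_two] at h1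
  have := Real.sin_sq_add_cos_sq (θ π)
  rw [h1, h2] at this
  norm_num at this
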